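/- Let A be an entrywise nonnegative m×n real matrix. Then τ₊(A) is at least the fractional rectangle cover number of A, i.e., τ₊(A) ≥ χ_frac(RG(A)). -/

import Mathlib

open Matrix

/-- The set of atoms `𝒜₊(A)`: rank-at-most-one matrices `R` with `0 ≤ R ≤ A` entrywise. -/
noncomputable def Aplus {m n : Type*} [Fintype m] [Fintype n]
    (A : Matrix m n ℝ) : Set (Matrix m n ℝ) :=
  {R | R.rank ≤ 1 ∧ ∀ i j, 0 ≤ R i j ∧ R i j ≤ A i j}

/-- `τ₊(A)`: supremum of `L(A)` over linear functionals `L` with `L ≤ 1` on `𝒜₊(A)`. -/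
noncomputable def tauPlus {m n : Type*} [Fintype m] [Fintype n]
    (A : Matrix m n ℝ) : ℝ :=
  sSup {x | ∃ L : Matrix m n ℝ →ₗ[ℝ] ℝ, (∀ R ∈ Aplus A, L R ≤ 1) ∧ L A = x}


/-- Minor vanishing for rank ≤ 1 matrices. -/
lemma minor_eq_of_rank_le_one {m n : ℕ} {R : Matrix (Fin m) (Fin n) ℝ}
    (h : R.rank ≤ 1) (i i' : Fin m) (j j' : Fin n) :
    R i j * R i' j' = R i j' * R i' j := by
  have hu : (Rᵀ j) ∈ LinearMap.range R.mulVecLin := by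
    rw [Matrix.range_mulVecLin]; exact Submodule.subset_span ⟨j, rfl⟩
  have hv : (Rᵀ j') ∈ LinearMap.range R.mulVecLin := by
    rw [Matrix.range_mulVecLin]; exact Submodule.subset_span ⟨j', rfl⟩
  have hnli : ¬ LinearIndependent ℝ ![Rᵀ j, Rᵀ j'] := by
    intro hli
    have hle : Submodule.span ℝ (Set.range ![Rᵀ j, Rᵀ j']) ≤ LinearMap.range R.mulVecLin := by
      rw [Submodule.span_le]
      rintro x ⟨k, rfl⟩
      fin_cases k
      · simpa using hu
      · simpa using hv
    have h2 : Module.finrank ℝ (Submodule.span ℝ (Set.range ![Rᵀ j, Rᵀ j'])) = 2 := by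
      rw [finrank_span_eq_card hli]; simp
    have := Submodule.finrank_mono hle
    rw [h2] at this
    exact absurd (this.trans h) (by norm_num)
  rw [LinearIndependent.pair_iff] at hnli
  push_neg at hnli
  obtain ⟨s, t, hst, hne⟩ := hnli
  have e1 : s * R i j + t * R i j' = 0 := by
    have := congrFun hst i; simpa [Matrix.transpose_apply] using this
  have e2 : s * R i' j + t * R i' j' = 0 := by
    have := congrFun hst i'; simpa [Matrix.transpose_apply] using this
  by_cases hs : s ≠ 0
  · have : s * (R i j * R i' j' - R i j' * R i' j) = 0 := by
      linear_combination R i' j' * e1 - R i j' * e2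
    have := mul_eq_zero.mp this
    rcases this with h0 | h0
    · exact absurd h0 hs
    · linarith
  · have ht : t ≠ 0 := by push_neg at hs; exact hne hs
    have hz : t * (R i j * R i' j' - R i j' * R i' j) = 0 := by
      linear_combination R i j * e2 - R i' j * e1
    rcases mul_eq_zero.mp hz with h0 | h0
    · exact absurd h0 ht
    · linarith

/-- A matrix of the form `u i * v j` has rank at most one. -/
lemma rank_le_one_of_outer {m n : ℕ} (M : Matrix (Fin m) (Fin n) ℝ)
    (u : Fin m → ℝ) (v : Fin n → ℝ) (h : ∀ i j, M i j = u i * v j) :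
    M.rank ≤ 1 := by
  have hle : LinearMap.range M.mulVecLin ≤ Submodule.span ℝ {u} := by
    rintro x ⟨w, rfl⟩
    have : M.mulVecLin w = (∑ j, v j * w j) • u := by
      funext i
      simp only [Matrix.mulVecLin_apply, Matrix.mulVec, dotProduct, h, Pi.smul_apply,
        smul_eq_mul, Finset.sum_mul, Finset.mul_sum]
      apply Finset.sum_congr rfl
      intro j _
      ring
    rw [this]
    exact Submodule.smul_mem _ _ (Submodule.subset_span rfl)
  calc M.rank = Module.finrank ℝ (LinearMap.range M.mulVecLin) := rfl
    _ ≤ Module.finrank ℝ (Submodule.span ℝ {u}) := Submodule.finrank_mono hle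
    _ ≤ 1 := by
        by_cases hu : u = 0
        · rw [hu, Submodule.span_zero_singleton, finrank_bot]
          norm_num
        · rw [finrank_span_singleton hu]

/-- The linear functional `M ↦ ∑ p, c p * M p.1 p.2`. -/
noncomputable def entryFunctional (m n : ℕ) (c : Fin m × Fin n → ℝ) :
    Matrix (Fin m) (Fin n) ℝ →ₗ[ℝ] ℝ where
  toFun M := ∑ p : Fin m × Fin n, c p * M p.1 p.2
  map_add' M N := by
    simp only [Matrix.add_apply, mul_add]
    rw [Finset.sum_add_distrib]
  map_smul' r M := by
    simp only [Matrix.smul_apply, smul_eq_mul, RingHom.id_apply, Finset.mul_sum]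
    exact Finset.sum_congr rfl fun p _ => by ring

lemma entryFunctional_apply {m n : ℕ} (c : Fin m × Fin n → ℝ) (M : Matrix (Fin m) (Fin n) ℝ) :
    entryFunctional m n c M = ∑ p : Fin m × Fin n, c p * M p.1 p.2 := rfl

lemma stdBasis_mem_Aplus {m n : ℕ} (A : Matrix (Fin m) (Fin n) ℝ) (hA : ∀ i j, 0 ≤ A i j)
    (i : Fin m) (j : Fin n) : Matrix.single i j (A i j) ∈ Aplus A := by
  constructor
  · apply rank_le_one_of_outer _ (fun a => if i = a then (1:ℝ) else 0)
      (fun b => if j = b then A i j else 0)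
    intro a b
    simp only [Matrix.single, of_apply]
    by_cases h1 : i = a <;> by_cases h2 : j = b <;> simp [h1, h2]
  · intro a b
    simp only [Matrix.single, of_apply]
    by_cases h1 : i = a ∧ j = b
    · obtain ⟨rfl, rfl⟩ := h1
      simp [hA]
    · simp [h1, hA]

lemma tau_bddAbove {m n : ℕ} (A : Matrix (Fin m) (Fin n) ℝ) (hA : ∀ i j, 0 ≤ A i j) :
    BddAbove {x | ∃ L : Matrix (Fin m) (Fin n) ℝ →ₗ[ℝ] ℝ,
      (∀ R ∈ Aplus A, L R ≤ 1) ∧ L A = x} := by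
  refine ⟨(Fintype.card (Fin m × Fin n) : ℝ), ?_⟩
  rintro x ⟨L, hL, rfl⟩
  have hrepr : A = ∑ p : Fin m × Fin n, Matrix.single p.1 p.2 (A p.1 p.2) := by
    conv_lhs => rw [matrix_eq_sum_single A]
    rw [← Finset.sum_product', Finset.univ_product_univ]
  calc L A = ∑ p : Fin m × Fin n, L (Matrix.single p.1 p.2 (A p.1 p.2)) := by
        rw [← map_sum, ← hrepr]
    _ ≤ ∑ _p : Fin m × Fin n, (1:ℝ) :=
        Finset.sum_le_sum fun p _ => hL _ (stdBasis_mem_Aplus A hA p.1 p.2)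
    _ = (Fintype.card (Fin m × Fin n) : ℝ) := by simp

lemma le_tauPlus {m n : ℕ} (A : Matrix (Fin m) (Fin n) ℝ) (hA : ∀ i j, 0 ≤ A i j)
    (L : Matrix (Fin m) (Fin n) ℝ →ₗ[ℝ] ℝ) (hL : ∀ R ∈ Aplus A, L R ≤ 1) :
    L A ≤ tauPlus A :=
  le_csSup (tau_bddAbove A hA) ⟨L, hL, rfl⟩

lemma atom_support_rect {m n : ℕ} {A R : Matrix (Fin m) (Fin n) ℝ} (hR : R ∈ Aplus A) :
    ∃ I : Finset (Fin m), ∃ J : Finset (Fin n),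
      (∀ i ∈ I, ∀ j ∈ J, 0 < A i j) ∧ (∀ i j, R i j ≠ 0 → i ∈ I ∧ j ∈ J) := by
  classical
  obtain ⟨hrank, hbound⟩ := hR
  refine ⟨Finset.univ.filter (fun i => ∃ j, R i j ≠ 0),
         Finset.univ.filter (fun j => ∃ i, R i j ≠ 0), ?_, ?_⟩
  · intro i hi j hj
    simp only [Finset.mem_filter, Finset.mem_univ, true_and] at hi hj
    obtain ⟨j0, hj0⟩ := hi
    obtain ⟨i0, hi0⟩ := hj
    have hm := minor_eq_of_rank_le_one hrank i i0 j j0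
    have h1 : 0 < R i j0 := lt_of_le_of_ne (hbound i j0).1 (Ne.symm hj0)
    have h2 : 0 < R i0 j := lt_of_le_of_ne (hbound i0 j).1 (Ne.symm hi0)
    have hp : 0 < R i j * R i0 j0 := by rw [hm]; positivity
    have h3 : 0 ≤ R i0 j0 := (hbound i0 j0).1
    have h4 : 0 < R i j := by nlinarith
    exact lt_of_lt_of_le h4 (hbound i j).2
  · intro i j hij
    exact ⟨Finset.mem_filter.mpr ⟨Finset.mem_univ _, ⟨j, hij⟩⟩,
           Finset.mem_filter.mpr ⟨Finset.mem_univ _, ⟨i, hij⟩⟩⟩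

lemma entryFunctional_le_one {m n : ℕ} (A : Matrix (Fin m) (Fin n) ℝ)
    (y : Fin m × Fin n → ℝ) (hy0 : ∀ p, 0 ≤ y p)
    (hyR : ∀ I : Finset (Fin m), ∀ J : Finset (Fin n), (∀ i ∈ I, ∀ j ∈ J, 0 < A i j) →
      ∑ p : Fin m × Fin n, (if p.1 ∈ I ∧ p.2 ∈ J then y p else 0) ≤ 1)
    (R : Matrix (Fin m) (Fin n) ℝ) (hR : R ∈ Aplus A) :
    entryFunctional m n (fun p => if 0 < A p.1 p.2 then y p / A p.1 p.2 else 0) R ≤ 1 := by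
  classical
  obtain ⟨I, J, hmono, hsupp⟩ := atom_support_rect hR
  rw [entryFunctional_apply]
  refine le_trans (Finset.sum_le_sum (fun p _ => ?_)) (hyR I J hmono)
  by_cases hAp : 0 < A p.1 p.2
  · simp only [hAp, if_true]
    by_cases hRp : R p.1 p.2 = 0
    · rw [hRp, mul_zero]
      by_cases hp : p.1 ∈ I ∧ p.2 ∈ J <;> simp [hp, hy0 p]
    · obtain ⟨hI, hJ⟩ := hsupp _ _ hRp
      simp only [hI, hJ, and_self, if_true]
      have hle : R p.1 p.2 ≤ A p.1 p.2 := (hR.2 p.1 p.2).2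
      have := hy0 p
      calc y p / A p.1 p.2 * R p.1 p.2 ≤ y p / A p.1 p.2 * A p.1 p.2 := by
            apply mul_le_mul_of_nonneg_left hle
            positivity
        _ = y p := by field_simp
  · simp only [hAp, if_false, zero_mul]
    by_cases hp : p.1 ∈ I ∧ p.2 ∈ J <;> simp [hp, hy0 p]

noncomputable section

abbrev Hsp (m n : ℕ) : Type := EuclideanSpace ℝ ((Fin m × Fin n) ⊕ Unit)

def toH (m n : ℕ) (f : (Fin m × Fin n) ⊕ Unit → ℝ) : Hsp m n := WithLp.toLp 2 f

lemma toH_apply (m n : ℕ) (f : (Fin m × Fin n) ⊕ Unit → ℝ) (k : (Fin m × Fin n) ⊕ Unit) :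
    toH m n f k = f k := rfl

lemma coord_dist_le {ι : Type*} [Fintype ι] (x y : EuclideanSpace ℝ ι) (k : ι) :
    dist (x k) (y k) ≤ dist x y := by
  rw [EuclideanSpace.dist_eq]
  rw [show dist (x k) (y k) = Real.sqrt (dist (x k) (y k) ^ 2) from
    (Real.sqrt_sq dist_nonneg).symm]
  apply Real.sqrt_le_sqrt
  exact Finset.single_le_sum (f := fun i => dist (x i) (y i) ^ 2)
    (fun i _ => sq_nonneg _) (Finset.mem_univ k)

open scoped InnerProductSpace in
lemma inner_H {m n : ℕ} (a y : Hsp m n) :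
    ⟪a, y⟫_ℝ = (∑ p : Fin m × Fin n, a (Sum.inl p) * y (Sum.inl p))
      + a (Sum.inr ()) * y (Sum.inr ()) := by
  rw [PiLp.inner_apply, Fintype.sum_sum_type]
  simp [RCLike.inner_apply, conj_trivial]
  simp only [mul_comm]

def coneC (m n : ℕ) (A : Matrix (Fin m) (Fin n) ℝ) : ConvexCone ℝ (Hsp m n) where
  carrier := {h | ∃ x : Finset (Fin m) × Finset (Fin n) → ℝ, ∃ s : Fin m × Fin n → ℝ, ∃ r : ℝ,
    (∀ R, 0 ≤ x R) ∧ (∀ p, 0 ≤ s p) ∧ 0 ≤ r ∧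
    (∀ R, x R ≠ 0 → ∀ i ∈ R.1, ∀ j ∈ R.2, 0 < A i j) ∧
    (∀ p : Fin m × Fin n, h (Sum.inl p) =
        (∑ R : Finset (Fin m) × Finset (Fin n), if p.1 ∈ R.1 ∧ p.2 ∈ R.2 then x R else 0) - s p) ∧
    h (Sum.inr ()) = (∑ R : Finset (Fin m) × Finset (Fin n), x R) + r}
  smul_mem' := by
    rintro c hc h ⟨x, s, r, hx, hs, hr, hmono, hcoord, hlast⟩
    refine ⟨fun R => c * x R, fun p => c * s p, c * r,
      fun R => mul_nonneg hc.le (hx R), fun p => mul_nonneg hc.le (hs p),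
      mul_nonneg hc.le hr, ?_, ?_, ?_⟩
    · intro R hR i hi j hj
      refine hmono R (fun h0 => hR ?_) i hi j hj
      beta_reduce
      rw [h0, mul_zero]
    · intro p
      have h1 : (c • h) (Sum.inl p) = c * h (Sum.inl p) := rfl
      rw [h1, hcoord p, mul_sub, Finset.mul_sum]
      congr 1
      exact Finset.sum_congr rfl fun R _ => by rw [mul_ite, mul_zero]
    · have h1 : (c • h) (Sum.inr ()) = c * h (Sum.inr ()) := rfl
      rw [h1, hlast, mul_add, Finset.mul_sum]
  add_mem' := by
    rintro h1 ⟨x1, s1, r1, hx1, hs1, hr1, hm1, hc1, hl1⟩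
      h2 ⟨x2, s2, r2, hx2, hs2, hr2, hm2, hc2, hl2⟩
    refine ⟨fun R => x1 R + x2 R, fun p => s1 p + s2 p, r1 + r2,
      fun R => add_nonneg (hx1 R) (hx2 R), fun p => add_nonneg (hs1 p) (hs2 p),
      add_nonneg hr1 hr2, ?_, ?_, ?_⟩
    · intro R hR i hi j hj
      by_cases h01 : x1 R = 0
      · have h02 : x2 R ≠ 0 := fun h02 => hR (by simp [h01, h02])
        exact hm2 R h02 i hi j hj
      · exact hm1 R h01 i hi j hj
    · intro p
      have hh : (h1 + h2) (Sum.inl p) = h1 (Sum.inl p) + h2 (Sum.inl p) := rfl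
      have hsum : ∑ R : Finset (Fin m) × Finset (Fin n),
          (if p.1 ∈ R.1 ∧ p.2 ∈ R.2 then x1 R + x2 R else 0)
          = (∑ R : Finset (Fin m) × Finset (Fin n), if p.1 ∈ R.1 ∧ p.2 ∈ R.2 then x1 R else 0)
          + (∑ R : Finset (Fin m) × Finset (Fin n), if p.1 ∈ R.1 ∧ p.2 ∈ R.2 then x2 R else 0) := by
        rw [← Finset.sum_add_distrib]
        exact Finset.sum_congr rfl fun R _ => by split <;> simp
      rw [hh, hc1 p, hc2 p, hsum]
      ring
    · have hh : (h1 + h2) (Sum.inr ()) = h1 (Sum.inr ()) + h2 (Sum.inr ()) := rfl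
      rw [hh, hl1, hl2, Finset.sum_add_distrib]
      ring

end

open scoped InnerProductSpace

lemma mem_coneC_iff {m n : ℕ} {A : Matrix (Fin m) (Fin n) ℝ} {h : Hsp m n} :
    h ∈ coneC m n A ↔ ∃ x : Finset (Fin m) × Finset (Fin n) → ℝ, ∃ s : Fin m × Fin n → ℝ, ∃ r : ℝ,
    (∀ R, 0 ≤ x R) ∧ (∀ p, 0 ≤ s p) ∧ 0 ≤ r ∧
    (∀ R, x R ≠ 0 → ∀ i ∈ R.1, ∀ j ∈ R.2, 0 < A i j) ∧
    (∀ p : Fin m × Fin n, h (Sum.inl p) =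
        (∑ R : Finset (Fin m) × Finset (Fin n), if p.1 ∈ R.1 ∧ p.2 ∈ R.2 then x R else 0) - s p) ∧
    h (Sum.inr ()) = (∑ R : Finset (Fin m) × Finset (Fin n), x R) + r :=
  Iff.rfl

lemma exists_dual {m n : ℕ} (A : Matrix (Fin m) (Fin n) ℝ) (t : ℝ)
    (ht : t < sInf {s : ℝ | ∃ x : Finset (Fin m) × Finset (Fin n) → ℝ,
      (∀ R, 0 ≤ x R) ∧
      (∀ R, x R ≠ 0 → ∀ i ∈ R.1, ∀ j ∈ R.2, 0 < A i j) ∧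
      (∀ i j, 0 < A i j →
        1 ≤ ∑ R : Finset (Fin m) × Finset (Fin n),
              if i ∈ R.1 ∧ j ∈ R.2 then x R else 0) ∧
      s = ∑ R : Finset (Fin m) × Finset (Fin n), x R}) :
    ∃ y : Fin m × Fin n → ℝ, (∀ p, 0 ≤ y p) ∧
      (∀ I : Finset (Fin m), ∀ J : Finset (Fin n), (∀ i ∈ I, ∀ j ∈ J, 0 < A i j) →
        ∑ p : Fin m × Fin n, (if p.1 ∈ I ∧ p.2 ∈ J then y p else 0) ≤ 1) ∧
      t < ∑ p : Fin m × Fin n, (if 0 < A p.1 p.2 then y p else 0) := by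
  classical
  set S := {s : ℝ | ∃ x : Finset (Fin m) × Finset (Fin n) → ℝ,
      (∀ R, 0 ≤ x R) ∧
      (∀ R, x R ≠ 0 → ∀ i ∈ R.1, ∀ j ∈ R.2, 0 < A i j) ∧
      (∀ i j, 0 < A i j →
        1 ≤ ∑ R : Finset (Fin m) × Finset (Fin n),
              if i ∈ R.1 ∧ j ∈ R.2 then x R else 0) ∧
      s = ∑ R : Finset (Fin m) × Finset (Fin n), x R} with hSdef
  have hS0 : ∀ s ∈ S, 0 ≤ s := by
    rintro s ⟨x, hx0, -, -, rfl⟩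
    exact Finset.sum_nonneg fun R _ => hx0 R
  set v := sInf S with hvdef
  have hv0 : 0 ≤ v := Real.sInf_nonneg hS0
  set b : Hsp m n :=
    toH m n (Sum.elim (fun p => if 0 < A p.1 p.2 then (1:ℝ) else 0) (fun _ => t)) with hbdef
  -- `b` is not in the closure of the cone
  have hbK : b ∉ closure ((coneC m n A : Set (Hsp m n))) := by
    intro hb
    have hvt : 0 < v - t := sub_pos.mpr ht
    set δ := min (1/2 : ℝ) ((v - t)/(2*(v+1))) with hδdef
    have hδpos : 0 < δ := lt_min (by norm_num) (by positivity)
    have hδhalf : δ ≤ 1/2 := min_le_left _ _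
    have h1δ : (0:ℝ) < 1 - δ := by linarith
    have hkey : t + δ < v * (1 - δ) := by
      have h2 : δ ≤ (v - t)/(2*(v+1)) := min_le_right _ _
      rw [le_div_iff₀ (by positivity)] at h2
      nlinarith
    obtain ⟨a, haC, hdist⟩ := Metric.mem_closure_iff.mp hb δ hδpos
    obtain ⟨x, s, r, hx0, hs0, hr0, hmono, hcoord, hlast⟩ := haC
    have hcover : ∀ p : Fin m × Fin n, 0 < A p.1 p.2 →
        1 - δ ≤ ∑ R : Finset (Fin m) × Finset (Fin n),
          (if p.1 ∈ R.1 ∧ p.2 ∈ R.2 then x R else 0) := by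
      intro p hp
      have hd := lt_of_le_of_lt (coord_dist_le b a (Sum.inl p)) hdist
      rw [Real.dist_eq] at hd
      have hb1 : b (Sum.inl p) = 1 := by rw [hbdef, toH_apply, Sum.elim_inl, if_pos hp]
      rw [hb1, hcoord p] at hd
      have habs := abs_lt.mp hd
      have := hs0 p
      linarith [habs.1, habs.2]
    have htot : (∑ R : Finset (Fin m) × Finset (Fin n), x R) ≤ t + δ := by
      have hd := lt_of_le_of_lt (coord_dist_le b a (Sum.inr ())) hdist
      rw [Real.dist_eq] at hd
      have hb2 : b (Sum.inr ()) = t := by rw [hbdef, toH_apply, Sum.elim_inr]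
      rw [hb2, hlast] at hd
      have habs := abs_lt.mp hd
      linarith [habs.1, habs.2]
    have hmem : (∑ R : Finset (Fin m) × Finset (Fin n), x R / (1 - δ)) ∈ S := by
      refine ⟨fun R => x R / (1 - δ), fun R => div_nonneg (hx0 R) h1δ.le, ?_, ?_, rfl⟩
      · intro R hR i hi j hj
        refine hmono R (fun h0 => hR ?_) i hi j hj
        simp [h0]
      · intro i j hij
        have hcov := hcover (i, j) hij
        have heq : (∑ R : Finset (Fin m) × Finset (Fin n),
            if i ∈ R.1 ∧ j ∈ R.2 then x R / (1-δ) else 0)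
            = (∑ R : Finset (Fin m) × Finset (Fin n),
                if i ∈ R.1 ∧ j ∈ R.2 then x R else 0)/(1-δ) := by
          rw [Finset.sum_div]
          exact Finset.sum_congr rfl fun R _ => by split <;> simp
        rw [heq, le_div_iff₀ h1δ, one_mul]
        exact le_trans (by linarith) hcov
    have hle : v ≤ ∑ R : Finset (Fin m) × Finset (Fin n), x R / (1 - δ) :=
      csInf_le ⟨0, fun s hs => hS0 s hs⟩ hmem
    have heq2 : (∑ R : Finset (Fin m) × Finset (Fin n), x R / (1 - δ))
        = (∑ R : Finset (Fin m) × Finset (Fin n), x R) / (1-δ) := by rw [Finset.sum_div]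
    have hlt : (∑ R : Finset (Fin m) × Finset (Fin n), x R)/(1-δ) < v := by
      rw [div_lt_iff₀ h1δ]
      exact lt_of_le_of_lt htot hkey
    rw [heq2] at hle
    linarith
  -- separation
  set K := (coneC m n A).closure with hKdef
  have hne : (K : Set (Hsp m n)).Nonempty := by
    refine ⟨0, ?_⟩
    rw [hKdef, ConvexCone.coe_closure]
    apply subset_closure
    show (0 : Hsp m n) ∈ coneC m n A
    exact ⟨0, 0, 0, fun R => le_refl _, fun p => le_refl _, le_refl _,
      fun R hR => absurd rfl hR, fun p => by simp, by simp⟩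
  have hcl : IsClosed (K : Set (Hsp m n)) := by
    rw [hKdef, ConvexCone.coe_closure]; exact isClosed_closure
  have hbnot : b ∉ K := fun hb => hbK (ConvexCone.mem_closure.mp hb)
  have h0K : (0 : Hsp m n) ∈ K := by
    rw [← SetLike.mem_coe, hKdef, ConvexCone.coe_closure]
    apply subset_closure
    show (0 : Hsp m n) ∈ coneC m n A
    exact ⟨0, 0, 0, fun R => le_refl _, fun p => le_refl _, le_refl _,
      fun R hR => absurd rfl hR, fun p => by simp, by simp⟩
  let KC : ProperCone ℝ (Hsp m n) :=
    { carrier := (K : Set (Hsp m n))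
      add_mem' := fun ha hb => K.add_mem ha hb
      zero_mem' := h0K
      smul_mem' := fun c z hz => by
        rcases c with ⟨c, hc⟩
        show c • z ∈ K
        rcases hc.eq_or_lt with h | h
        · subst h; simpa using h0K
        · exact K.smul_mem h hz
      isClosed' := hcl }
  obtain ⟨y, hy1, hy2⟩ := ProperCone.hyperplane_separation' (x₀ := b) (C := KC) hbnot
  set yl : Fin m × Fin n → ℝ := fun p => y (Sum.inl p) with hyl
  set yr : ℝ := y (Sum.inr ()) with hyr
  -- the general inequality for elements of the cone
  have hgen : ∀ (x : Finset (Fin m) × Finset (Fin n) → ℝ) (s : Fin m × Fin n → ℝ) (r : ℝ),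
      (∀ R, 0 ≤ x R) → (∀ p, 0 ≤ s p) → 0 ≤ r →
      (∀ R, x R ≠ 0 → ∀ i ∈ R.1, ∀ j ∈ R.2, 0 < A i j) →
      0 ≤ (∑ p : Fin m × Fin n,
          ((∑ R : Finset (Fin m) × Finset (Fin n), if p.1 ∈ R.1 ∧ p.2 ∈ R.2 then x R else 0)
            - s p) * yl p)
        + ((∑ R : Finset (Fin m) × Finset (Fin n), x R) + r) * yr := by
    intro x s r hx0 hs0 hr0 hmono
    have hzmem : toH m n (Sum.elim
        (fun p => (∑ R : Finset (Fin m) × Finset (Fin n),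
            if p.1 ∈ R.1 ∧ p.2 ∈ R.2 then x R else 0) - s p)
        (fun _ => (∑ R : Finset (Fin m) × Finset (Fin n), x R) + r)) ∈ coneC m n A :=
      ⟨x, s, r, hx0, hs0, hr0, hmono, fun p => rfl, rfl⟩
    have h0 := hy1 _ (ConvexCone.mem_closure.mpr (subset_closure hzmem))
    rw [inner_H] at h0
    simpa [toH_apply] using h0
  -- slack inequalities: yl ≤ 0
  have hslack : ∀ q : Fin m × Fin n, yl q ≤ 0 := by
    intro q
    have h0 := hgen 0 (fun p => if p = q then 1 else 0) 0 (fun R => le_refl _)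
      (fun p => by split <;> norm_num) (le_refl _) (fun R hR => absurd rfl hR)
    simp only [Pi.zero_apply, ite_self, Finset.sum_const_zero, zero_add, zero_mul, add_zero,
      zero_sub, neg_mul] at h0
    rw [Finset.sum_neg_distrib] at h0
    have hs : (∑ p : Fin m × Fin n, (if p = q then (1:ℝ) else 0) * yl p) = yl q := by
      rw [Finset.sum_congr rfl (fun p _ => by rw [ite_mul, one_mul, zero_mul]),
        Finset.sum_ite_eq' Finset.univ q yl, if_pos (Finset.mem_univ q)]
    rw [hs] at h0
    linarith
  have hrpos : 0 ≤ yr := by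
    have h0 := hgen 0 0 1 (fun R => le_refl _) (fun p => le_refl _) zero_le_one
      (fun R hR => absurd rfl hR)
    simp only [Pi.zero_apply, ite_self, Finset.sum_const_zero, sub_zero, zero_mul,
      zero_add, one_mul, Finset.sum_const_zero] at h0
    simpa using h0
  have hrect : ∀ R₀ : Finset (Fin m) × Finset (Fin n), (∀ i ∈ R₀.1, ∀ j ∈ R₀.2, 0 < A i j) →
      0 ≤ (∑ p : Fin m × Fin n, if p.1 ∈ R₀.1 ∧ p.2 ∈ R₀.2 then yl p else 0) + yr := by
    intro R₀ hR₀
    have h0 := hgen (fun R => if R = R₀ then 1 else 0) 0 0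
      (fun R => by split <;> norm_num) (fun p => le_refl _) (le_refl _)
      (fun R hR => by
        by_cases hRR : R = R₀
        · subst hRR; exact hR₀
        · exact absurd (if_neg hRR) hR)
    have hin : ∀ p : Fin m × Fin n,
        (∑ R : Finset (Fin m) × Finset (Fin n),
          if p.1 ∈ R.1 ∧ p.2 ∈ R.2 then (if R = R₀ then (1:ℝ) else 0) else 0)
        = (if p.1 ∈ R₀.1 ∧ p.2 ∈ R₀.2 then (1:ℝ) else 0) := by
      intro p
      have hterm : ∀ R : Finset (Fin m) × Finset (Fin n),
          (if p.1 ∈ R.1 ∧ p.2 ∈ R.2 then (if R = R₀ then (1:ℝ) else 0) else 0)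
          = (if R = R₀ then (if p.1 ∈ R₀.1 ∧ p.2 ∈ R₀.2 then (1:ℝ) else 0) else 0) := by
        intro R
        by_cases h1 : R = R₀
        · subst h1; by_cases h2 : p.1 ∈ R.1 ∧ p.2 ∈ R.2 <;> simp [h2]
        · by_cases h2 : p.1 ∈ R.1 ∧ p.2 ∈ R.2 <;> simp [h1, h2]
      rw [Finset.sum_congr rfl (fun R _ => hterm R),
        Finset.sum_ite_eq' Finset.univ R₀ (fun _ => if p.1 ∈ R₀.1 ∧ p.2 ∈ R₀.2 then (1:ℝ) else 0),
        if_pos (Finset.mem_univ R₀)]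
    have htot1 : (∑ R : Finset (Fin m) × Finset (Fin n), if R = R₀ then (1:ℝ) else 0) = 1 := by
      rw [Finset.sum_ite_eq' Finset.univ R₀ (fun _ => (1:ℝ)), if_pos (Finset.mem_univ R₀)]
    simp only [Pi.zero_apply, sub_zero, add_zero] at h0
    rw [Finset.sum_congr rfl (fun p _ => by rw [hin p]), htot1, one_mul] at h0
    have hterm2 : ∀ p : Fin m × Fin n,
        (if p.1 ∈ R₀.1 ∧ p.2 ∈ R₀.2 then (1:ℝ) else 0) * yl p
        = (if p.1 ∈ R₀.1 ∧ p.2 ∈ R₀.2 then yl p else 0) := by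
      intro p; rw [ite_mul, one_mul, zero_mul]
    rw [Finset.sum_congr rfl (fun p _ => hterm2 p)] at h0
    exact h0
  have hybs : (∑ p : Fin m × Fin n, if 0 < A p.1 p.2 then yl p else 0) + t * yr < 0 := by
    have hh := hy2
    rw [inner_H] at hh
    simp only [hbdef, toH_apply, Sum.elim_inl, Sum.elim_inr] at hh
    have hterm : ∀ p : Fin m × Fin n,
        (if 0 < A p.1 p.2 then (1:ℝ) else 0) * y (Sum.inl p)
        = (if 0 < A p.1 p.2 then yl p else 0) := by
      intro p; by_cases hp : 0 < A p.1 p.2 <;> simp [hp, hyl]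
    rw [Finset.sum_congr rfl (fun p _ => hterm p)] at hh
    linarith
  by_cases hyr0 : yr = 0
  · exfalso
    have hzero : ∀ p : Fin m × Fin n, 0 < A p.1 p.2 → yl p = 0 := by
      intro p hp
      have h1 := hslack p
      have h2 := hrect ({p.1}, {p.2}) (by
        intro i hi j hj
        simp only [Finset.mem_singleton] at hi hj
        rw [hi, hj]
        exact hp)
      have hsum : (∑ q : Fin m × Fin n,
          if q.1 ∈ ({p.1} : Finset (Fin m)) ∧ q.2 ∈ ({p.2} : Finset (Fin n)) then yl q else 0)
          = yl p := by
        have hterm : ∀ q : Fin m × Fin n,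
            (if q.1 ∈ ({p.1} : Finset (Fin m)) ∧ q.2 ∈ ({p.2} : Finset (Fin n)) then yl q else 0)
            = (if q = p then yl q else 0) := by
          intro q
          have : (q.1 ∈ ({p.1} : Finset (Fin m)) ∧ q.2 ∈ ({p.2} : Finset (Fin n))) ↔ q = p := by
            simp [Prod.ext_iff]
          rw [if_congr this rfl rfl]
        rw [Finset.sum_congr rfl (fun q _ => hterm q),
          Finset.sum_ite_eq' Finset.univ p yl, if_pos (Finset.mem_univ p)]
      rw [hsum, hyr0, add_zero] at h2
      linarith
    have hZ : (∑ p : Fin m × Fin n, if 0 < A p.1 p.2 then yl p else 0) = 0 :=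
      Finset.sum_eq_zero (fun p _ => by
        by_cases hp : 0 < A p.1 p.2 <;> simp [hp, hzero p])
    rw [hZ, hyr0, mul_zero, add_zero] at hybs
    exact lt_irrefl 0 hybs
  · have hyrpos : 0 < yr := lt_of_le_of_ne hrpos (Ne.symm hyr0)
    refine ⟨fun p => -yl p / yr, fun p => div_nonneg (neg_nonneg.mpr (hslack p)) hyrpos.le,
      ?_, ?_⟩
    · intro I J hIJ
      have h2 := hrect (I, J) hIJ
      rw [← mul_le_mul_iff_of_pos_right hyrpos]
      have hsum : (∑ p : Fin m × Fin n, if p.1 ∈ I ∧ p.2 ∈ J then -yl p / yr else 0) * yr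
          = -(∑ p : Fin m × Fin n, if p.1 ∈ I ∧ p.2 ∈ J then yl p else 0) := by
        rw [Finset.sum_mul, ← Finset.sum_neg_distrib]
        refine Finset.sum_congr rfl fun p _ => ?_
        by_cases hc : p.1 ∈ I ∧ p.2 ∈ J <;> simp [hc]
        field_simp
      rw [hsum, one_mul]
      linarith
    · have hsum2 : (∑ p : Fin m × Fin n, if 0 < A p.1 p.2 then -yl p / yr else 0)
          = (-(∑ p : Fin m × Fin n, if 0 < A p.1 p.2 then yl p else 0))/yr := by
        rw [← Finset.sum_neg_distrib, Finset.sum_div]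
        refine Finset.sum_congr rfl fun p _ => ?_
        by_cases hc : 0 < A p.1 p.2 <;> simp [hc, neg_div]
      rw [hsum2, lt_div_iff₀ hyrpos]
      linarith


/-- `τ₊(A)` is at least the fractional rectangle cover number of `A`:
the infimum of total weight of nonnegative weights on monochromatic rectangles of `A`
fractionally covering the support of `A` is at most `τ₊(A)`. -/
theorem stmt10 {m n : ℕ} (A : Matrix (Fin m) (Fin n) ℝ) (hA : ∀ i j, 0 ≤ A i j) :
    sInf {s : ℝ | ∃ x : Finset (Fin m) × Finset (Fin n) → ℝ,
      (∀ R, 0 ≤ x R) ∧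
      (∀ R, x R ≠ 0 → ∀ i ∈ R.1, ∀ j ∈ R.2, 0 < A i j) ∧
      (∀ i j, 0 < A i j →
        1 ≤ ∑ R : Finset (Fin m) × Finset (Fin n),
              if i ∈ R.1 ∧ j ∈ R.2 then x R else 0) ∧
      s = ∑ R : Finset (Fin m) × Finset (Fin n), x R} ≤ tauPlus A := by
  apply le_of_forall_lt
  intro t ht
  obtain ⟨y, hy0, hyR, hyA⟩ := exists_dual A t ht
  have hL := le_tauPlus A hA
    (entryFunctional m n (fun p => if 0 < A p.1 p.2 then y p / A p.1 p.2 else 0))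
    (fun R hR => entryFunctional_le_one A y hy0 hyR R hR)
  have hLA : entryFunctional m n (fun p => if 0 < A p.1 p.2 then y p / A p.1 p.2 else 0) A
      = ∑ p : Fin m × Fin n, (if 0 < A p.1 p.2 then y p else 0) := by
    rw [entryFunctional_apply]
    refine Finset.sum_congr rfl fun p _ => ?_
    by_cases hp : 0 < A p.1 p.2
    · rw [if_pos hp, if_pos hp]
      field_simp
    · rw [if_neg hp, if_neg hp, zero_mul]
  rw [hLA] at hL
  exact lt_of_lt_of_le hyA hL
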